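/- arXiv:1401.3541 — 2 statements merged into one kernel-verified Lean document; each statement's English description precedes it below -/
import Mathlib

section
/- Let f : ℝⁿ → ℝᵐ be bounded. Then the Filippov regularization g is upper semi-continuous in the sense that its graph is closed: if (x_k) is a sequence in ℝⁿ converging to x, (y_k) is a sequence in ℝᵐ converging to y, and y_k ∈ g(x_k) for every k, then y ∈ g(x). -/
/-- The Filippov regularization of `f` at `x`:
`g(x) = ⋂_{γ>0} closedConvexHull (f '' B(x,γ))`. -/
noncomputable def filippov {n m : ℕ}
    (f : EuclideanSpace ℝ (Fin n) → EuclideanSpace ℝ (Fin m))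
    (x : EuclideanSpace ℝ (Fin n)) : Set (EuclideanSpace ℝ (Fin m)) :=
  ⋂ γ > (0 : ℝ), closedConvexHull ℝ (f '' Metric.ball x γ)

theorem closedConvexHull_mono' {E : Type*} [NormedAddCommGroup E] [NormedSpace ℝ E]
    {s t : Set E} (h : s ⊆ t) : closedConvexHull ℝ s ⊆ closedConvexHull ℝ t :=
  closedConvexHull_min (h.trans subset_closedConvexHull) (convex_closedConvexHull) isClosed_closedConvexHull

/-- If `f` is bounded, the Filippov regularization has a closed graph:
if `x_k → x`, `y_k → y` and `y_k ∈ g(x_k)` for all `k`, then `y ∈ g(x)`. -/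
theorem filippov_upper_semicontinuous {n m : ℕ}
    (f : EuclideanSpace ℝ (Fin n) → EuclideanSpace ℝ (Fin m))
    (hf : ∃ M : ℝ, ∀ y, ‖f y‖ ≤ M)
    (xk : ℕ → EuclideanSpace ℝ (Fin n)) (x : EuclideanSpace ℝ (Fin n))
    (yk : ℕ → EuclideanSpace ℝ (Fin m)) (y : EuclideanSpace ℝ (Fin m))
    (hx : Filter.Tendsto xk Filter.atTop (nhds x))
    (hy : Filter.Tendsto yk Filter.atTop (nhds y))
    (hmem : ∀ k, yk k ∈ filippov f (xk k)) :
    y ∈ filippov f x := by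
  simp only [filippov, Set.mem_iInter]
  intro γ hγ
  have hclosed : IsClosed (closedConvexHull ℝ (f '' Metric.ball x γ)) :=
    isClosed_closedConvexHull
  refine hclosed.mem_of_tendsto hy ?_
  have hdist : ∀ᶠ k in Filter.atTop, dist (xk k) x < γ / 2 :=
    (Metric.tendsto_nhds.mp hx) (γ / 2) (by linarith)
  filter_upwards [hdist] with k hk
  have hsub : Metric.ball (xk k) (γ / 2) ⊆ Metric.ball x γ := fun z hz => by
    have h1 := Metric.mem_ball.mp hz
    have h2 := dist_triangle z (xk k) x
    exact Metric.mem_ball.mpr (by linarith)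
  have := hmem k
  simp only [filippov, Set.mem_iInter] at this
  exact closedConvexHull_mono' (Set.image_mono (f := f) hsub) (this (γ / 2) (by linarith))
end

section
/- Let θ : ℝ → ℝ be monotone nondecreasing and L-Lipschitz (L > 0), let θ̄ ∈ ℝ, and suppose there exists x* with θ(x*) = θ̄. Let 0 < ε with ε·L ≤ 1 and define the iteration x_{n+1} = x_n + ε·(θ̄ − θ(x_n)) from an arbitrary x_0 ∈ ℝ. Then the sequence (x_n) converges to a limit ℓ ∈ ℝ satisfying θ(ℓ) = θ̄. -/
open Filter

private lemma constraint_iteration_aux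
    (θ : ℝ → ℝ) (hθmono : Monotone θ)
    (L : ℝ) (hL : 0 < L) (hlip : ∀ x y : ℝ, |θ x - θ y| ≤ L * |x - y|)
    (θbar xs : ℝ) (hxs : θ xs = θbar)
    (ε : ℝ) (hε : 0 < ε) (hεL : ε * L ≤ 1)
    (x : ℕ → ℝ) (hiter : ∀ n, x (n + 1) = x n + ε * (θbar - θ (x n)))
    (h0 : x 0 ≤ xs) :
    ∃ l : ℝ, Filter.Tendsto x Filter.atTop (nhds l) ∧ θ l = θbar := by
  have hcont : Continuous θ := by
    have : LipschitzWith ⟨L, hL.le⟩ θ :=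
      LipschitzWith.of_dist_le_mul (fun a b => by
        rw [Real.dist_eq, Real.dist_eq]; exact hlip a b)
    exact this.continuous
  -- upper bound by xs
  have hub : ∀ n, x n ≤ xs := by
    intro n
    induction n with
    | zero => exact h0
    | succ n ih =>
      have h1 : θ xs - θ (x n) ≤ L * (xs - x n) := by
        have h2 := (abs_le.mp (hlip xs (x n))).2
        rwa [abs_of_nonneg (by linarith)] at h2
      rw [hiter n]
      nlinarith [hθmono ih]
  -- monotone
  have hmonx : Monotone x := by
    apply monotone_nat_of_le_succ
    intro n
    have : θ (x n) ≤ θbar := hxs ▸ hθmono (hub n)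
    rw [hiter n]
    nlinarith
  have hbdd : BddAbove (Set.range x) := ⟨xs, by rintro _ ⟨n, rfl⟩; exact hub n⟩
  have hlim : Tendsto x atTop (nhds (⨆ n, x n)) := tendsto_atTop_ciSup hmonx hbdd
  set l := ⨆ n, x n with hl
  refine ⟨l, hlim, ?_⟩
  have h1 : Tendsto (fun n => x (n + 1)) atTop (nhds l) :=
    hlim.comp (tendsto_add_atTop_nat 1)
  have h2 : Tendsto (fun n => x n + ε * (θbar - θ (x n))) atTop
      (nhds (l + ε * (θbar - θ l))) :=
    hlim.add (tendsto_const_nhds.mul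
      (tendsto_const_nhds.sub ((hcont.tendsto l).comp hlim)))
  have h3 : l = l + ε * (θbar - θ l) := by
    apply tendsto_nhds_unique h1
    simpa only [hiter] using h2
  have : ε * (θbar - θ l) = 0 := by linarith
  have := (mul_eq_zero.mp this).resolve_left hε.ne'
  linarith

/-- Convergence of the scalar constraint-driven iteration
`x_{n+1} = x_n + ε·(θ̄ − θ(x_n))` for nondecreasing `L`-Lipschitz `θ` with a
root `θ(x*) = θ̄` and step size `ε·L ≤ 1`: the iterates converge to a limit
`ℓ` with `θ(ℓ) = θ̄`. -/
theorem constraint_iteration_converges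
    (θ : ℝ → ℝ) (hθmono : Monotone θ)
    (L : ℝ) (hL : 0 < L) (hlip : ∀ x y : ℝ, |θ x - θ y| ≤ L * |x - y|)
    (θbar : ℝ) (hroot : ∃ xstar : ℝ, θ xstar = θbar)
    (ε : ℝ) (hε : 0 < ε) (hεL : ε * L ≤ 1)
    (x : ℕ → ℝ) (hiter : ∀ n, x (n + 1) = x n + ε * (θbar - θ (x n))) :
    ∃ l : ℝ, Filter.Tendsto x Filter.atTop (nhds l) ∧ θ l = θbar := by
  obtain ⟨xs, hxs⟩ := hroot
  rcases le_total (x 0) xs with h0 | h0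
  · exact constraint_iteration_aux θ hθmono L hL hlip θbar xs hxs ε hε hεL x hiter h0
  · -- apply aux to the negated problem
    obtain ⟨l, hl, hθl⟩ := constraint_iteration_aux (fun y => -θ (-y))
      (fun a b hab => by simpa using hθmono (neg_le_neg hab))
      L hL
      (fun a b => by
        have := hlip (-a) (-b)
        calc |-θ (-a) - -θ (-b)| = |θ (-a) - θ (-b)| := by rw [← abs_neg]; ring_nf
        _ ≤ L * |(-a) - (-b)| := hlip (-a) (-b)
        _ = L * |a - b| := by rw [← abs_neg]; ring_nf)
      (-θbar) (-xs) (by simp [hxs])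
      ε hε hεL (fun n => -x n)
      (fun n => by simp [hiter n]; ring)
      (by simpa using h0)
    refine ⟨-l, ?_, ?_⟩
    · have := hl.neg
      simpa using this
    · simpa using congrArg Neg.neg hθl
end
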